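/- Let G be a finite simple connected prime graph with diam(G) ≥ 2. Then there exist extremities x and y of G such that d(x,y) = diam(G). -/

import Mathlib

variable {V : Type*}

/-- The closed neighbourhood `N[v]` of a vertex. -/
def closedNbhd (G : SimpleGraph V) (v : V) : Set V := insert v (G.neighborSet v)

/-- `N[S] = ⋃_{v ∈ S} N[v]`. -/
def closedNbhdSet (G : SimpleGraph V) (S : Set V) : Set V := ⋃ v ∈ S, closedNbhd G v

/-- A vertex `v` is an extremity if the subgraph induced on `V \ N[v]` is
connected (possibly empty). -/
def IsExtremity (G : SimpleGraph V) (v : V) : Prop :=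
  (G.induce (closedNbhd G v)ᶜ).Preconnected

/-- `M` is a module: every vertex outside `M` is adjacent to all of `M` or none of `M`. -/
def IsModuleSet (G : SimpleGraph V) (M : Set V) : Prop :=
  ∀ z ∉ M, ∀ x ∈ M, ∀ y ∈ M, (G.Adj z x ↔ G.Adj z y)

/-- A graph is prime if its only modules are `∅`, `V` and the singletons. -/
def IsPrimeGraph (G : SimpleGraph V) : Prop :=
  ∀ M : Set V, IsModuleSet G M → M = ∅ ∨ M = Set.univ ∨ ∃ v, M = {v}

/-- Eccentricity of a vertex in a finite graph. -/
noncomputable def ecc [Fintype V] (G : SimpleGraph V) (u : V) : ℕ :=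
  Finset.univ.sup (G.dist u)

/-- Diameter of a finite graph. -/
noncomputable def gdiam [Fintype V] (G : SimpleGraph V) : ℕ :=
  Finset.univ.sup fun u => ecc G u

/-- `u ⊥_w v`: vertices `u` and `v` lie in different connected components of the
subgraph induced on `V \ N[w]`. -/
def Perp (G : SimpleGraph V) (w u v : V) : Prop :=
  u ∉ closedNbhd G w ∧ v ∉ closedNbhd G w ∧
    ¬ ∃ p : G.Walk u v, ∀ z ∈ p.support, z ∉ closedNbhd G w

/-- `S` is `u`-transitive: for every `x ∈ S` and vertex `y` distinct from and
nonadjacent to `x`, `x ⊥_y u` implies `y ∈ S`. -/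
def UTransitive (G : SimpleGraph V) (u : V) (S : Set V) : Prop :=
  ∀ x ∈ S, ∀ y : V, y ≠ x → ¬ G.Adj x y → Perp G y x u → y ∈ S

/-- `S` is a dominating set: every vertex lies in `N[S]`. -/
def IsDominatingSet (G : SimpleGraph V) (S : Set V) : Prop :=
  ∀ v : V, ∃ s ∈ S, v ∈ closedNbhd G s

/-- `D` is a dominating target: every superset of `D` inducing a connected
subgraph is a dominating set. -/
def IsDomTarget (G : SimpleGraph V) (D : Set V) : Prop :=
  ∀ S : Set V, D ⊆ S → (G.induce S).Connected → IsDominatingSet G S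

/-- An asteroidal set: an independent set `A` such that for every `a ∈ A`, all
vertices of `A \ {a}` lie in a single connected component of the subgraph
induced on `V \ N[a]`. -/
def IsAsteroidalSet (G : SimpleGraph V) (A : Set V) : Prop :=
  (A.Pairwise fun x y => ¬ G.Adj x y) ∧
  ∀ a ∈ A, ∀ b ∈ A, ∀ c ∈ A, b ≠ a → c ≠ a →
    ∃ p : G.Walk b c, ∀ z ∈ p.support, z ∉ closedNbhd G a

namespace StmtAux

/-- `z` is joined to `u` by a walk avoiding `N[v]`. -/
def CP (G : SimpleGraph V) (u v z : V) : Prop :=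
  ∃ p : G.Walk u z, ∀ a ∈ p.support, a ∉ closedNbhd G v

/-- `z` lies outside `N[v]` and is separated from `u` by `N[v]`. -/
def KK (G : SimpleGraph V) (u v z : V) : Prop :=
  z ∉ closedNbhd G v ∧ ¬ CP G u v z

lemma cp_not_nbhd {G : SimpleGraph V} {u v z : V} (h : CP G u v z) :
    z ∉ closedNbhd G v := by
  obtain ⟨p, hp⟩ := h
  exact hp z p.end_mem_support

/-- L2: a neighbour of `w ∈ K_v` outside `N[v]` is also in `K_v`. -/
lemma kk_adj {G : SimpleGraph V} {u v w t : V} (hw : KK G u v w)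
    (hadj : G.Adj w t) (ht : t ∉ closedNbhd G v) : KK G u v t := by
  refine ⟨ht, fun ⟨p, hp⟩ => hw.2 ⟨p.concat hadj.symm, ?_⟩⟩
  intro a ha
  rw [SimpleGraph.Walk.support_concat, List.mem_append] at ha
  rcases ha with ha | ha
  · exact hp a ha
  · simp only [List.mem_singleton] at ha
    subst ha; exact hw.1

/-- L3: if `w ∈ K_v` then walks avoiding `N[v]` also avoid `N[w]`. -/
lemma cp_mono {G : SimpleGraph V} {u v w q : V} (hw : KK G u v w)
    (hq : CP G u v q) : CP G u w q := by
  classical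
  obtain ⟨p, hp⟩ := hq
  refine ⟨p, fun a ha hcl => ?_⟩
  have hcp_a : CP G u v a := ⟨p.takeUntil a ha,
    fun b hb => hp b (p.support_takeUntil_subset ha hb)⟩
  rcases hcl with rfl | hadj
  · exact hw.2 hcp_a
  · -- hadj : a ∈ G.neighborSet w, i.e. G.Adj w a
    exact (kk_adj hw hadj (hp a ha)).2 hcp_a


lemma dist_le_ecc [Fintype V] {G : SimpleGraph V} (u w : V) :
    G.dist u w ≤ ecc G u :=
  Finset.le_sup (Finset.mem_univ w)

lemma ecc_le_gdiam [Fintype V] {G : SimpleGraph V} (u : V) :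
    ecc G u ≤ gdiam G :=
  Finset.le_sup (f := fun x => ecc G x) (Finset.mem_univ u)

/-- L1: if `v` is at maximal distance from `u` and `w ∈ K_v`, then `w` is too. -/
lemma far_of_kk [Fintype V] {G : SimpleGraph V} (hG : G.Connected)
    {u v w : V} (hu : ecc G u = gdiam G) (hv : G.dist u v = gdiam G)
    (hd : 2 ≤ gdiam G) (hw : KK G u v w) : G.dist u w = gdiam G := by
  classical
  obtain ⟨p, hp⟩ := hG.exists_walk_length_eq_dist u w
  have hb : ∃ b ∈ p.support, b ∈ closedNbhd G v := by
    by_contra h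
    push_neg at h
    exact hw.2 ⟨p, h⟩
  obtain ⟨b, hbs, hbn⟩ := hb
  refine le_antisymm (hu ▸ dist_le_ecc u w) ?_
  have hlen : (p.takeUntil b hbs).length + (p.dropUntil b hbs).length = p.length := by
    rw [← SimpleGraph.Walk.length_append, SimpleGraph.Walk.take_spec]
  have h1 : G.dist u b ≤ (p.takeUntil b hbs).length := SimpleGraph.dist_le _
  have h2 : 1 ≤ (p.dropUntil b hbs).length := by
    rcases Nat.eq_zero_or_pos (p.dropUntil b hbs).length with h0 | h0
    · exact absurd (SimpleGraph.Walk.eq_of_length_eq_zero h0 ▸ hbn) hw.1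
    · exact h0
  have h3 : G.dist b v ≤ 1 := by
    rcases hbn with rfl | hadj
    · simp [SimpleGraph.dist_self]
    · exact le_of_eq (SimpleGraph.dist_eq_one_iff_adj.mpr (G.adj_symm hadj))
  have h4 : gdiam G ≤ G.dist u b + 1 :=
    calc gdiam G = G.dist u v := hv.symm
    _ ≤ G.dist u b + G.dist b v := hG.dist_triangle
    _ ≤ G.dist u b + 1 := by omega
  omega

lemma not_nbhd_of_far [Fintype V] {G : SimpleGraph V} {u v : V}
    (hd : 2 ≤ gdiam G) (hv : G.dist u v = gdiam G) : u ∉ closedNbhd G v := by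
  rintro (rfl | hadj)
  · rw [SimpleGraph.dist_self] at hv; omega
  · have : G.dist u v = 1 := SimpleGraph.dist_eq_one_iff_adj.mpr (G.adj_symm hadj)
    omega

/-- Walks inside a set give reachability in the induced subgraph. -/
lemma walk_reachable_induce {G : SimpleGraph V} {s : Set V} :
    ∀ {a b : V} (p : G.Walk a b), (∀ z ∈ p.support, z ∈ s) →
      ∀ (ha : a ∈ s) (hb : b ∈ s), (G.induce s).Reachable ⟨a, ha⟩ ⟨b, hb⟩ := by
  intro a b p
  induction p with
  | nil => intro _ ha hb; exact SimpleGraph.Reachable.refl _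
  | @cons a c b h q ih =>
    intro hsup ha hb
    have hc : c ∈ s := hsup c (by simp)
    have hadj : (G.induce s).Adj ⟨a, ha⟩ ⟨c, hc⟩ := h
    exact hadj.reachable.trans (ih (fun z hz => hsup z (by simp [hz])) hc hb)

/-- If every vertex outside `N[v]` is joined to `u` avoiding `N[v]`,
then `v` is an extremity. -/
lemma ext_of_kk_empty {G : SimpleGraph V} {u v : V}
    (h : ∀ z, z ∉ closedNbhd G v → CP G u v z) : IsExtremity G v := by
  rintro ⟨a, ha⟩ ⟨b, hb⟩
  obtain ⟨p, hp⟩ := h a ha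
  obtain ⟨q, hq⟩ := h b hb
  refine walk_reachable_induce (p.reverse.append q) ?_ ha hb
  intro z hz
  rw [SimpleGraph.Walk.mem_support_append_iff, SimpleGraph.Walk.support_reverse,
    List.mem_reverse] at hz
  rcases hz with hz | hz
  · exact hp z hz
  · exact hq z hz


/-- Claim 1: from any vertex of maximal eccentricity there is an extremity
at maximal distance. -/
lemma claim1 [Fintype V] {G : SimpleGraph V} (hG : G.Connected)
    (hprime : IsPrimeGraph G) (hd : 2 ≤ gdiam G) (u : V)
    (hu : ecc G u = gdiam G) :
    ∃ y : V, IsExtremity G y ∧ G.dist u y = gdiam G := by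
  classical
  by_contra hno
  push_neg at hno
  -- every far vertex has a nonempty K
  have hKne : ∀ y : V, G.dist u y = gdiam G → ∃ z, KK G u y z := by
    intro y hy
    by_contra h
    push_neg at h
    refine hno y (ext_of_kk_empty (u := u) (fun z hz => ?_)) hy
    by_contra hcp
    exact h z ⟨hz, hcp⟩
  -- the K-step reachability relation
  set R : V → V → Prop := Relation.ReflTransGen (fun a b => KK G u a b) with hR_def
  have hRstep : ∀ {a b : V}, KK G u a b → R a b := fun h => Relation.ReflTransGen.single h
  -- far vertices stay far along R, and CP only grows
  have hRkey : ∀ {x y : V}, R x y → G.dist u x = gdiam G →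
      G.dist u y = gdiam G ∧ ∀ q, CP G u x q → CP G u y q := by
    intro x y h
    induction h with
    | refl => exact fun hx => ⟨hx, fun q hq => hq⟩
    | tail _ hstep ih =>
      intro hx
      obtain ⟨hfar, hmono⟩ := ih hx
      exact ⟨far_of_kk hG hu hfar hd hstep, fun q hq => cp_mono hstep (hmono q hq)⟩
  -- the closure of a vertex
  set c : V → Finset V := fun x => Finset.univ.filter (fun y => R x y) with hc_def
  have hmemc : ∀ {x y : V}, y ∈ c x ↔ R x y := by
    intro x y; simp [hc_def]
  have hself : ∀ x : V, x ∈ c x := fun x => hmemc.mpr Relation.ReflTransGen.refl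
  have hsubc : ∀ {x y : V}, y ∈ c x → c y ⊆ c x := by
    intro x y hy z hz
    exact hmemc.mpr ((hmemc.mp hy).trans (hmemc.mp hz))
  -- a far starting vertex
  obtain ⟨v₀, -, hv₀⟩ := Finset.exists_mem_eq_sup Finset.univ
    ⟨u, Finset.mem_univ u⟩ (G.dist u)
  have hv₀far : G.dist u v₀ = gdiam G := by rw [← hv₀]; exact hu
  -- a vertex with minimal closure
  obtain ⟨x₀, hx₀v₀, hx₀min⟩ := Finset.exists_min_image (c v₀)
    (fun x => (c x).card) ⟨v₀, hself v₀⟩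
  set M : Finset V := c x₀ with hM_def
  have hMx₀ : x₀ ∈ M := hself x₀
  have hMeq : ∀ y ∈ M, c y = M := by
    intro y hy
    have hy' : y ∈ c v₀ := hsubc hx₀v₀ hy
    exact (Finset.eq_of_subset_of_card_le (hsubc hy) (hx₀min y hy')).symm ▸ rfl
  have hMR : ∀ y ∈ M, ∀ z ∈ M, R y z := by
    intro y hy z hz
    exact hmemc.mp ((hMeq y hy) ▸ hz)
  have hx₀far : G.dist u x₀ = gdiam G := (hRkey (hmemc.mp hx₀v₀) hv₀far).1
  have hMfar : ∀ y ∈ M, G.dist u y = gdiam G := fun y hy =>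
    (hRkey (hMR x₀ hMx₀ y hy) hx₀far).1
  -- closure under K-steps
  have hMclosed : ∀ y ∈ M, ∀ {z}, KK G u y z → z ∈ M := by
    intro y hy z hz
    exact (hMeq y hy) ▸ hmemc.mpr (hRstep hz)
  -- M is a module
  have hmod : IsModuleSet G (↑M : Set V) := by
    have key : ∀ z ∉ M, ∀ x ∈ M, ∀ y ∈ M, G.Adj z x → G.Adj z y := by
      intro z hz x hx y hy hadj
      have hncp : ¬ CP G u x z := by
        intro hcp
        exact cp_not_nbhd hcp (Or.inr hadj.symm)
      by_contra hnadj
      have hzy : z ∉ closedNbhd G y := by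
        rintro (rfl | h)
        · exact hz hy
        · exact hnadj h.symm
      rcases Classical.em (CP G u y z) with hcp | hncp'
      · exact hncp ((hRkey (hMR y hy x hx) (hMfar y hy)).2 z hcp)
      · exact hz (hMclosed y hy ⟨hzy, hncp'⟩)
    intro z hz x hx y hy
    simp only [Finset.mem_coe] at hz hx hy
    exact ⟨fun h => key z hz x hx y hy h, fun h => key z hz y hy x hx h⟩
  -- M is a nontrivial module: contradiction with primality
  obtain ⟨z₁, hz₁⟩ := hKne x₀ hx₀far
  have hz₁M : z₁ ∈ M := hMclosed x₀ hMx₀ hz₁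
  have hz₁ne : z₁ ≠ x₀ := by
    rintro rfl
    exact hz₁.1 (Or.inl rfl)
  rcases hprime (↑M) hmod with h | h | ⟨w, h⟩
  · exact absurd (h ▸ (Finset.mem_coe.mpr hMx₀)) (Set.notMem_empty x₀)
  · have : u ∈ (↑M : Set V) := h ▸ Set.mem_univ u
    have := hMfar u (Finset.mem_coe.mp this)
    rw [SimpleGraph.dist_self] at this
    omega
  · have h1 : x₀ ∈ ({w} : Set V) := h ▸ Finset.mem_coe.mpr hMx₀
    have h2 : z₁ ∈ ({w} : Set V) := h ▸ Finset.mem_coe.mpr hz₁M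
    rw [Set.mem_singleton_iff] at h1 h2
    exact hz₁ne (h2.trans h1.symm)

end StmtAux

theorem stmt_3 [Fintype V] (G : SimpleGraph V) (hG : G.Connected)
    (hprime : IsPrimeGraph G) (hdiam : 2 ≤ gdiam G) :
    ∃ x y : V, IsExtremity G x ∧ IsExtremity G y ∧ G.dist x y = gdiam G := by
  classical
  have hnonempty : Nonempty V := hG.nonempty
  obtain ⟨u, -, hu⟩ := Finset.exists_mem_eq_sup Finset.univ
    Finset.univ_nonempty (fun x => ecc G x)
  have hu' : ecc G u = gdiam G := hu.symm
  obtain ⟨y, hy_ext, hy⟩ := StmtAux.claim1 hG hprime hdiam u hu'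
  have hyecc : ecc G y = gdiam G := by
    refine le_antisymm (StmtAux.ecc_le_gdiam y) ?_
    calc gdiam G = G.dist u y := hy.symm
    _ = G.dist y u := SimpleGraph.dist_comm
    _ ≤ ecc G y := StmtAux.dist_le_ecc y u
  obtain ⟨x, hx_ext, hx⟩ := StmtAux.claim1 hG hprime hdiam y hyecc
  exact ⟨x, y, hx_ext, hy_ext, by rw [SimpleGraph.dist_comm]; exact hx⟩
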